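/- For any graph G, the Mycielskian M(G) satisfies χ(M(G)) = χ(G) + 1. -/

import Mathlib

open SimpleGraph

/-- The Mycielskian of a graph `G`: vertices are `V ⊕ V ⊕ {u}`, with the original
edges, edges from each original vertex to the copies of its neighbours, and edges
from every copy to the apex `u`. -/
def mycielskian {V : Type*} (G : SimpleGraph V) : SimpleGraph (V ⊕ V ⊕ Unit) :=
  SimpleGraph.fromRel (fun x y =>
    match x, y with
    | Sum.inl v, Sum.inl w => G.Adj v w
    | Sum.inl v, Sum.inr (Sum.inl w) => G.Adj v w
    | Sum.inr (Sum.inl _), Sum.inr (Sum.inr _) => True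
    | _, _ => False)

lemma myc_adj {V : Type*} (G : SimpleGraph V) (x y : V ⊕ V ⊕ Unit) :
    (mycielskian G).Adj x y ↔ x ≠ y ∧
      ((match x, y with
        | Sum.inl v, Sum.inl w => G.Adj v w
        | Sum.inl v, Sum.inr (Sum.inl w) => G.Adj v w
        | Sum.inr (Sum.inl _), Sum.inr (Sum.inr _) => True
        | _, _ => False) ∨
       (match y, x with
        | Sum.inl v, Sum.inl w => G.Adj v w
        | Sum.inl v, Sum.inr (Sum.inl w) => G.Adj v w
        | Sum.inr (Sum.inl _), Sum.inr (Sum.inr _) => True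
        | _, _ => False)) := SimpleGraph.fromRel_adj _ x y

lemma myc_up {V : Type*} (G : SimpleGraph V) (n : ℕ) (h : G.Colorable n) :
    (mycielskian G).Colorable (n + 1) := by
  obtain ⟨c⟩ := h
  refine ⟨SimpleGraph.Coloring.mk (fun x =>
    match x with
    | Sum.inl v => (c v).castSucc
    | Sum.inr (Sum.inl v) => (c v).castSucc
    | Sum.inr (Sum.inr _) => Fin.last n) ?_⟩
  rintro (v|v|⟨⟩) (w|w|⟨⟩) h hc <;> rw [myc_adj] at h <;> obtain ⟨hne, h⟩ := h
  · rcases h with h | h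
    · exact c.valid h (Fin.castSucc_injective _ hc)
    · exact c.valid h (Fin.castSucc_injective _ hc).symm
  · rcases h with h | h
    · exact c.valid h (Fin.castSucc_injective _ hc)
    · exact h
  · exact h.elim id id
  · rcases h with h | h
    · exact h
    · exact c.valid h (Fin.castSucc_injective _ hc).symm
  · exact h.elim id id
  · exact absurd hc (Fin.castSucc_lt_last _).ne
  · exact h.elim id id
  · exact absurd hc.symm (Fin.castSucc_lt_last _).ne
  · exact hne rfl

lemma myc_down {V : Type*} (G : SimpleGraph V) (n : ℕ)
    (h : (mycielskian G).Colorable n) : 1 ≤ n ∧ G.Colorable (n - 1) := by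
  obtain ⟨c⟩ := h
  set A : Fin n := c (Sum.inr (Sum.inr ())) with hA
  have hn : 1 ≤ n := A.pos
  refine ⟨hn, ?_⟩
  have adj1 : ∀ v w, G.Adj v w → c (Sum.inl v) ≠ c (Sum.inl w) := fun v w hvw =>
    c.valid ((myc_adj G _ _).2 ⟨by simp [hvw.ne], Or.inl hvw⟩)
  have adj2 : ∀ v w, G.Adj v w → c (Sum.inl v) ≠ c (Sum.inr (Sum.inl w)) := fun v w hvw =>
    c.valid ((myc_adj G _ _).2 ⟨by simp, Or.inl hvw⟩)
  have adj3 : ∀ v, c (Sum.inr (Sum.inl v)) ≠ A := fun v =>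
    c.valid ((myc_adj G _ _).2 ⟨by simp, Or.inl trivial⟩)
  classical
  let d : V → {x : Fin n // x ≠ A} := fun v =>
    if hv : c (Sum.inl v) = A then ⟨c (Sum.inr (Sum.inl v)), adj3 v⟩
    else ⟨c (Sum.inl v), hv⟩
  have hd : ∀ v w, G.Adj v w → d v ≠ d w := by
    intro v w hvw heq
    simp only [d] at heq
    by_cases hv : c (Sum.inl v) = A <;> by_cases hw : c (Sum.inl w) = A <;>
      simp [hv, hw] at heq
    · exact adj1 v w hvw (hv.trans hw.symm)
    · exact adj2 w v hvw.symm heq.symm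
    · exact adj2 v w hvw heq
    · exact adj1 v w hvw heq
  have card : Fintype.card {x : Fin n // x ≠ A} = n - 1 := by
    simp [Fintype.card_subtype_compl]
  exact card ▸ (SimpleGraph.Coloring.mk d (fun hvw => hd _ _ hvw)).colorable

theorem stmt5 {V : Type*} (G : SimpleGraph V) :
    (mycielskian G).chromaticNumber = G.chromaticNumber + 1 := by
  apply le_antisymm
  · rcases eq_or_ne G.chromaticNumber ⊤ with h | h
    · simp [h]
    · have hc := G.colorable_of_chromaticNumber_ne_top h
      calc (mycielskian G).chromaticNumber
          ≤ ((ENat.toNat G.chromaticNumber + 1 : ℕ) : ℕ∞) := (myc_up G _ hc).chromaticNumber_le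
        _ = G.chromaticNumber + 1 := by push_cast; rw [ENat.coe_toNat h]
  · rcases eq_or_ne (mycielskian G).chromaticNumber ⊤ with h | h
    · simp [h]
    · have hc := (mycielskian G).colorable_of_chromaticNumber_ne_top h
      obtain ⟨h1, hG⟩ := myc_down G _ hc
      have hle := hG.chromaticNumber_le
      calc G.chromaticNumber + 1
          ≤ ((ENat.toNat (mycielskian G).chromaticNumber - 1 : ℕ) : ℕ∞) + 1 :=
            add_le_add_left hle 1
        _ = (mycielskian G).chromaticNumber := by
            rw [← ENat.coe_toNat h]
            exact_mod_cast Nat.sub_add_cancel h1
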